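/- For every 0 < p < 1, the discrete Laguerre functions are orthonormal in ℓ²(ℕ,ℝ): for all j, k ∈ ℕ the series Σ_{t=0}^∞ ℓ_j(t;p)·ℓ_k(t;p) converges and equals 1 if j = k and 0 if j ≠ k. -/

import Mathlib

/-- The discrete Laguerre functions `ℓ_j(t; p)` in time-domain, defined recursively:
`ℓ_0(t) = √(1-p)·(√p)^t`, `ℓ_{j+1}(0) = -√p·ℓ_j(0)`,
`ℓ_{j+1}(t+1) = √p·ℓ_{j+1}(t) + ℓ_j(t) - √p·ℓ_j(t+1)`. -/
noncomputable def discreteLaguerre (p : ℝ) : ℕ → ℕ → ℝ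
  | 0, t => Real.sqrt (1 - p) * Real.sqrt p ^ t
  | j + 1, 0 => -Real.sqrt p * discreteLaguerre p j 0
  | j + 1, t + 1 =>
      Real.sqrt p * discreteLaguerre p (j + 1) t + discreteLaguerre p j t
        - Real.sqrt p * discreteLaguerre p j (t + 1)
  termination_by j t => (j, t)


namespace DLaux

noncomputable def X (p : ℝ) (j : ℕ) : ℕ → ℝ
  | 0 => 0
  | t + 1 => Real.sqrt p * X p j t + Real.sqrt (1 - p) * discreteLaguerre p j t

lemma succ_eq (p : ℝ) (hp0 : 0 < p) (hp1 : p < 1) (j t : ℕ) :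
    discreteLaguerre p (j + 1) t =
      Real.sqrt (1 - p) * X p j t - Real.sqrt p * discreteLaguerre p j t := by
  have ha : Real.sqrt p ^ 2 = p := Real.sq_sqrt hp0.le
  have hb : Real.sqrt (1 - p) ^ 2 = 1 - p := Real.sq_sqrt (by linarith)
  induction t with
  | zero => simp [discreteLaguerre, X]
  | succ t ih =>
      rw [discreteLaguerre, ih, X]
      linear_combination (-discreteLaguerre p j t) * ha + (-discreteLaguerre p j t) * hb

lemma sqrt_lt_one (p : ℝ) (hp0 : 0 < p) (hp1 : p < 1) : Real.sqrt p < 1 := by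
  have : Real.sqrt p < Real.sqrt 1 := Real.sqrt_lt_sqrt hp0.le hp1
  simpa using this

/-- geometric bound on both `ℓ_j` and `X p j`, with rate `c = (√p+1)/2`. -/
lemma bound (p : ℝ) (hp0 : 0 < p) (hp1 : p < 1) (j : ℕ) :
    ∃ C : ℝ, 0 ≤ C ∧ ∀ t, |discreteLaguerre p j t| ≤ C * ((Real.sqrt p + 1) / 2) ^ t
      ∧ |X p j t| ≤ C * ((Real.sqrt p + 1) / 2) ^ t := by
  set a := Real.sqrt p with ha
  set b := Real.sqrt (1 - p) with hb
  set c := (a + 1) / 2 with hc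
  have ha0 : 0 ≤ a := Real.sqrt_nonneg _
  have ha1 : a < 1 := sqrt_lt_one p hp0 hp1
  have hb0 : 0 ≤ b := Real.sqrt_nonneg _
  have hac : a < c := by rw [hc]; linarith
  have hc0 : 0 < c := by rw [hc]; linarith
  have hc1 : c < 1 := by rw [hc]; linarith
  -- auxiliary claim: if ℓ_j is bounded by C c^t then X p j is bounded by K c^t
  have aux : ∀ (j : ℕ) (C : ℝ), 0 ≤ C →
      (∀ t, |discreteLaguerre p j t| ≤ C * c ^ t) →
      ∀ t, |X p j t| ≤ (b * C / (c - a)) * c ^ t := by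
    intro j C hC0 hC t
    have hca0 : (0:ℝ) < c - a := by linarith
    have hK0 : 0 ≤ b * C / (c - a) := div_nonneg (mul_nonneg hb0 hC0) hca0.le
    induction t with
    | zero => simpa [X] using hK0
    | succ t ih =>
        have h1 : |X p j (t + 1)| ≤ a * |X p j t| + b * |discreteLaguerre p j t| := by
          rw [X]
          calc |a * X p j t + b * discreteLaguerre p j t|
              ≤ |a * X p j t| + |b * discreteLaguerre p j t| := abs_add_le _ _
            _ = a * |X p j t| + b * |discreteLaguerre p j t| := by
                rw [abs_mul, abs_mul, abs_of_nonneg ha0, abs_of_nonneg hb0]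
        have h2 : a * |X p j t| + b * |discreteLaguerre p j t|
            ≤ a * ((b * C / (c - a)) * c ^ t) + b * (C * c ^ t) := by
          gcongr
          exact hC t
        have h3 : a * ((b * C / (c - a)) * c ^ t) + b * (C * c ^ t)
            = (b * C / (c - a)) * c ^ (t + 1) := by
          have hca : c - a ≠ 0 := ne_of_gt hca0
          field_simp
          ring
        linarith
  have hca0 : (0:ℝ) < c - a := by linarith
  have pack : ∀ (j : ℕ) (D : ℝ), 0 ≤ D → (∀ t, |discreteLaguerre p j t| ≤ D * c ^ t) →
      ∃ C : ℝ, 0 ≤ C ∧ ∀ t, |discreteLaguerre p j t| ≤ C * c ^ t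
        ∧ |X p j t| ≤ C * c ^ t := by
    intro j D hD0 hD
    have hK0 : 0 ≤ b * D / (c - a) := div_nonneg (mul_nonneg hb0 hD0) hca0.le
    refine ⟨D + b * D / (c - a), by linarith, fun t => ⟨?_, ?_⟩⟩
    · have := hD t
      have hct : (0:ℝ) ≤ c ^ t := pow_nonneg hc0.le t
      nlinarith
    · have := aux j D hD0 hD t
      have hct : (0:ℝ) ≤ c ^ t := pow_nonneg hc0.le t
      nlinarith
  induction j with
  | zero =>
      refine pack 0 b hb0 fun t => ?_
      have h0 : discreteLaguerre p 0 t = b * a ^ t := by simp [discreteLaguerre, ha, hb]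
      rw [h0, abs_mul, abs_of_nonneg hb0, abs_pow, abs_of_nonneg ha0]
      gcongr
  | succ j ih =>
      obtain ⟨C, hC0, hC⟩ := ih
      refine pack (j + 1) ((a + b) * C) (by positivity) fun t => ?_
      rw [succ_eq p hp0 hp1 j t]
      calc |b * X p j t - a * discreteLaguerre p j t|
          ≤ |b * X p j t| + |a * discreteLaguerre p j t| := abs_sub _ _
        _ = b * |X p j t| + a * |discreteLaguerre p j t| := by
            rw [abs_mul, abs_mul, abs_of_nonneg ha0, abs_of_nonneg hb0]
        _ ≤ b * (C * c ^ t) + a * (C * c ^ t) := by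
            have h1 := (hC t).1; have h2 := (hC t).2
            gcongr
        _ = (a + b) * C * c ^ t := by ring

end DLaux

namespace DLaux

lemma energy (p : ℝ) (hp0 : 0 < p) (hp1 : p < 1) (j k t : ℕ) :
    X p j (t + 1) * X p k (t + 1)
      + discreteLaguerre p (j + 1) t * discreteLaguerre p (k + 1) t
    = X p j t * X p k t + discreteLaguerre p j t * discreteLaguerre p k t := by
  have ha : Real.sqrt p ^ 2 = p := Real.sq_sqrt hp0.le
  have hb : Real.sqrt (1 - p) ^ 2 = 1 - p := Real.sq_sqrt (by linarith)
  rw [X, X, succ_eq p hp0 hp1 j t, succ_eq p hp0 hp1 k t]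
  linear_combination (X p j t * X p k t + discreteLaguerre p j t * discreteLaguerre p k t)
    * (ha + hb)

lemma summable_of_geom {f : ℕ → ℝ} {C r : ℝ} (h0 : 0 ≤ r) (h1 : r < 1)
    (hf : ∀ t, |f t| ≤ C * r ^ t) : Summable f :=
  Summable.of_norm_bounded ((summable_geometric_of_lt_one h0 h1).mul_left C)
    (by simpa [Real.norm_eq_abs] using hf)

lemma summable_mul (p : ℝ) (hp0 : 0 < p) (hp1 : p < 1) (j k : ℕ) :
    Summable (fun t => discreteLaguerre p j t * discreteLaguerre p k t) := by
  obtain ⟨Cj, hCj0, hCj⟩ := bound p hp0 hp1 j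
  obtain ⟨Ck, hCk0, hCk⟩ := bound p hp0 hp1 k
  set c := (Real.sqrt p + 1) / 2 with hc
  have ha0 : 0 ≤ Real.sqrt p := Real.sqrt_nonneg _
  have ha1 : Real.sqrt p < 1 := sqrt_lt_one p hp0 hp1
  have hc0 : 0 ≤ c := by rw [hc]; linarith
  have hc1 : c < 1 := by rw [hc]; linarith
  refine summable_of_geom (C := Cj * Ck) (r := c ^ 2) (by positivity)
    (by nlinarith) fun t => ?_
  rw [abs_mul]
  calc |discreteLaguerre p j t| * |discreteLaguerre p k t|
      ≤ (Cj * c ^ t) * (Ck * c ^ t) := by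
        have h1 := (hCj t).1; have h2 := (hCk t).1
        exact mul_le_mul h1 h2 (abs_nonneg _) (by positivity)
    _ = Cj * Ck * (c ^ 2) ^ t := by rw [sq, mul_pow]; ring

lemma hasSum_succ (p : ℝ) (hp0 : 0 < p) (hp1 : p < 1) (j k : ℕ) (S : ℝ)
    (h : HasSum (fun t => discreteLaguerre p j t * discreteLaguerre p k t) S) :
    HasSum (fun t => discreteLaguerre p (j + 1) t * discreteLaguerre p (k + 1) t) S := by
  obtain ⟨Cj, hCj0, hCj⟩ := bound p hp0 hp1 j
  obtain ⟨Ck, hCk0, hCk⟩ := bound p hp0 hp1 k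
  set c := (Real.sqrt p + 1) / 2 with hc
  have ha0 : 0 ≤ Real.sqrt p := Real.sqrt_nonneg _
  have ha1 : Real.sqrt p < 1 := sqrt_lt_one p hp0 hp1
  have hc0 : 0 ≤ c := by rw [hc]; linarith
  have hc1 : c < 1 := by rw [hc]; linarith
  set F : ℕ → ℝ := fun t => X p j t * X p k t with hF
  -- F tends to zero
  have hFb : ∀ n, ‖F n‖ ≤ Cj * Ck * (c ^ 2) ^ n := by
    intro n
    rw [Real.norm_eq_abs, hF]
    calc |X p j n * X p k n| = |X p j n| * |X p k n| := abs_mul _ _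
      _ ≤ (Cj * c ^ n) * (Ck * c ^ n) :=
          mul_le_mul (hCj n).2 (hCk n).2 (abs_nonneg _) (by positivity)
      _ = Cj * Ck * (c ^ 2) ^ n := by rw [sq, mul_pow]; ring
  have hF0 : Filter.Tendsto F Filter.atTop (nhds 0) := by
    refine squeeze_zero_norm hFb ?_
    have := tendsto_pow_atTop_nhds_zero_of_lt_one (by positivity : (0:ℝ) ≤ c ^ 2)
      (by nlinarith : c ^ 2 < 1)
    simpa using this.const_mul (Cj * Ck)
  -- the telescoping difference sums to zero
  set g : ℕ → ℝ := fun t => F (t + 1) - F t with hg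
  have hgf : ∀ t, g t = discreteLaguerre p j t * discreteLaguerre p k t
      - discreteLaguerre p (j + 1) t * discreteLaguerre p (k + 1) t := by
    intro t
    have := energy p hp0 hp1 j k t
    show X p j (t + 1) * X p k (t + 1) - X p j t * X p k t = _
    linarith
  have hgsummable : Summable g := by
    have : g = fun t => discreteLaguerre p j t * discreteLaguerre p k t
        - discreteLaguerre p (j + 1) t * discreteLaguerre p (k + 1) t := funext hgf
    rw [this]
    exact (summable_mul p hp0 hp1 j k).sub (summable_mul p hp0 hp1 (j+1) (k+1))
  have hgsum : HasSum g 0 := by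
    have h1 := hgsummable.hasSum
    have h2 := h1.tendsto_sum_nat
    have h3 : ∀ n, ∑ i ∈ Finset.range n, g i = F n := by
      intro n
      rw [hg]
      rw [Finset.sum_range_sub]
      simp [hF, X]
    have h4 : Filter.Tendsto (fun n => ∑ i ∈ Finset.range n, g i) Filter.atTop (nhds 0) := by
      simpa [funext h3] using hF0
    have : ∑' t, g t = 0 := tendsto_nhds_unique h2 h4
    rwa [this] at h1
  have hfun : (fun t => discreteLaguerre p (j + 1) t * discreteLaguerre p (k + 1) t)
      = fun t => discreteLaguerre p j t * discreteLaguerre p k t - g t := by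
    funext t
    rw [hgf t]
    ring
  rw [hfun]
  simpa using h.sub hgsum

end DLaux

namespace DLaux

lemma hasSum_base (p : ℝ) (hp0 : 0 < p) (hp1 : p < 1) (k : ℕ) :
    HasSum (fun t => discreteLaguerre p 0 t * discreteLaguerre p (k + 1) t) 0 := by
  obtain ⟨Ck, hCk0, hCk⟩ := bound p hp0 hp1 k
  set a := Real.sqrt p with ha
  set b := Real.sqrt (1 - p) with hb
  set c := (a + 1) / 2 with hc
  have ha2 : a ^ 2 = p := Real.sq_sqrt hp0.le
  have hb2 : b ^ 2 = 1 - p := Real.sq_sqrt (by linarith)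
  have ha0 : 0 ≤ a := Real.sqrt_nonneg _
  have ha1 : a < 1 := sqrt_lt_one p hp0 hp1
  have hc0 : 0 ≤ c := by rw [hc]; linarith
  have hc1 : c < 1 := by rw [hc]; linarith
  have hr0 : (0:ℝ) ≤ a * c := by positivity
  have hr1 : a * c < 1 := by nlinarith
  have hP : Summable (fun t => a ^ t * X p k t) := by
    refine summable_of_geom (C := Ck) hr0 hr1 fun t => ?_
    rw [abs_mul, abs_pow, abs_of_nonneg ha0, mul_pow]
    calc a ^ t * |X p k t| ≤ a ^ t * (Ck * c ^ t) := by
          have := (hCk t).2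
          gcongr
      _ = Ck * (a ^ t * c ^ t) := by ring
  have hQ : Summable (fun t => a ^ t * discreteLaguerre p k t) := by
    refine summable_of_geom (C := Ck) hr0 hr1 fun t => ?_
    rw [abs_mul, abs_pow, abs_of_nonneg ha0, mul_pow]
    calc a ^ t * |discreteLaguerre p k t| ≤ a ^ t * (Ck * c ^ t) := by
          have := (hCk t).1
          gcongr
      _ = Ck * (a ^ t * c ^ t) := by ring
  set P := ∑' t, a ^ t * X p k t with hPdef
  set Q := ∑' t, a ^ t * discreteLaguerre p k t with hQdef
  have key : P = p * P + a * b * Q := by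
    have h1 : P = a ^ 0 * X p k 0 + ∑' t, a ^ (t + 1) * X p k (t + 1) := by
      rw [hPdef]
      exact Summable.tsum_eq_zero_add hP
    have h2 : (fun t => a ^ (t + 1) * X p k (t + 1))
        = fun t => p * (a ^ t * X p k t) + (a * b) * (a ^ t * discreteLaguerre p k t) := by
      funext t
      rw [X, ← ha, ← hb, pow_succ]
      linear_combination (a ^ t * X p k t) * ha2
    have h3 : ∑' t, (p * (a ^ t * X p k t) + (a * b) * (a ^ t * discreteLaguerre p k t))
        = p * P + a * b * Q := by
      rw [Summable.tsum_add (hP.mul_left p) (hQ.mul_left (a * b)), tsum_mul_left, tsum_mul_left]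
    rw [h2, h3] at h1
    simpa [X] using h1
  have hsum : HasSum (fun t => b ^ 2 * (a ^ t * X p k t)
      - (a * b) * (a ^ t * discreteLaguerre p k t)) (b ^ 2 * P - (a * b) * Q) :=
    (hP.hasSum.mul_left _).sub (hQ.hasSum.mul_left _)
  have hval : b ^ 2 * P - (a * b) * Q = 0 := by linear_combination key + P * hb2
  have hfun : (fun t => discreteLaguerre p 0 t * discreteLaguerre p (k + 1) t)
      = fun t => b ^ 2 * (a ^ t * X p k t) - (a * b) * (a ^ t * discreteLaguerre p k t) := by
    funext t
    rw [succ_eq p hp0 hp1 k t, ← ha, ← hb]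
    have h0 : discreteLaguerre p 0 t = b * a ^ t := by simp [discreteLaguerre, ha, hb]
    rw [h0]
    ring
  rw [hfun, ← hval]
  exact hsum

end DLaux

/-- Orthonormality of the discrete Laguerre functions in `ℓ²(ℕ, ℝ)`. -/
theorem discreteLaguerre_orthonormal (p : ℝ) (hp0 : 0 < p) (hp1 : p < 1) (j k : ℕ) :
    HasSum (fun t : ℕ => discreteLaguerre p j t * discreteLaguerre p k t)
      (if j = k then (1 : ℝ) else 0) := by
  induction j generalizing k with
  | zero =>
      cases k with
      | zero =>
          rw [if_pos rfl]
          have hgeo : HasSum (fun t : ℕ => (1 - p) * p ^ t) 1 := by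
            have h := hasSum_geometric_of_lt_one hp0.le hp1
            have := h.mul_left (1 - p)
            rwa [mul_inv_cancel₀ (by linarith : (1:ℝ) - p ≠ 0)] at this
          have hfun : (fun t : ℕ => discreteLaguerre p 0 t * discreteLaguerre p 0 t)
              = fun t : ℕ => (1 - p) * p ^ t := by
            funext t
            have h0 : discreteLaguerre p 0 t = Real.sqrt (1 - p) * Real.sqrt p ^ t := by
              simp [discreteLaguerre]
            rw [h0]
            have ha2 : Real.sqrt p ^ 2 = p := Real.sq_sqrt hp0.le
            have hb2 : Real.sqrt (1 - p) ^ 2 = 1 - p := Real.sq_sqrt (by linarith)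
            calc Real.sqrt (1 - p) * Real.sqrt p ^ t * (Real.sqrt (1 - p) * Real.sqrt p ^ t)
                = Real.sqrt (1 - p) ^ 2 * (Real.sqrt p ^ 2) ^ t := by
                  rw [sq, sq, mul_pow]; ring
              _ = (1 - p) * p ^ t := by rw [ha2, hb2]
          rw [hfun]
          exact hgeo
      | succ k =>
          rw [if_neg (by omega)]
          exact DLaux.hasSum_base p hp0 hp1 k
  | succ j ih =>
      cases k with
      | zero =>
          rw [if_neg (by omega)]
          have h := DLaux.hasSum_base p hp0 hp1 j
          have hfun : (fun t => discreteLaguerre p (j + 1) t * discreteLaguerre p 0 t)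
              = fun t => discreteLaguerre p 0 t * discreteLaguerre p (j + 1) t := by
            funext t; ring
          rw [hfun]
          exact h
      | succ k =>
          have h := DLaux.hasSum_succ p hp0 hp1 j k _ (ih k)
          simpa [Nat.succ_inj] using h
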